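/- For 3 ≤ m ≤ n with n ≥ 4, the QE constant of K_{m,n}^m equals (mn − 4m − 2n + √(m²n² + 4n² − 4m²n))/(m + n). -/

import Mathlib

/-- The almost complete bipartite graph `K_{m,n}^t`: the complete bipartite graph on
parts `Fin m` and `Fin n`, with the `t` disjoint edges `{u_i, v_i}`, `i < t`, removed. -/
def Kmnt (m n t : ℕ) : SimpleGraph (Fin m ⊕ Fin n) :=
  SimpleGraph.fromRel (fun x y =>
    match x, y with
    | Sum.inl i, Sum.inr j => ¬((i : ℕ) = (j : ℕ) ∧ (i : ℕ) < t)
    | _, _ => False)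

open SimpleGraph Sum Finset

section KmntAux

lemma Kmnt_adj_inl_inr {m n : ℕ} (i : Fin m) (j : Fin n) :
    (Kmnt m n m).Adj (inl i) (inr j) ↔ (i : ℕ) ≠ (j : ℕ) := by
  simp only [Kmnt, fromRel_adj]
  constructor
  · rintro ⟨-, h | h⟩
    · exact fun he => h ⟨he, i.2⟩
    · exact absurd h not_false
  · intro h
    exact ⟨by simp, Or.inl fun ⟨he, _⟩ => h he⟩

lemma Kmnt_not_adj_inl_inl {m n : ℕ} (i j : Fin m) : ¬ (Kmnt m n m).Adj (inl i) (inl j) := by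
  simp [Kmnt, fromRel_adj]

lemma Kmnt_not_adj_inr_inr {m n : ℕ} (i j : Fin n) : ¬ (Kmnt m n m).Adj (inr i) (inr j) := by
  simp [Kmnt, fromRel_adj]

lemma Kmnt_exists_third (i j : ℕ) : ∃ k < 3, k ≠ i ∧ k ≠ j := by
  by_cases h0 : 0 ≠ i ∧ 0 ≠ j
  · exact ⟨0, by omega, h0.1, h0.2⟩
  by_cases h1 : 1 ≠ i ∧ 1 ≠ j
  · exact ⟨1, by omega, h1.1, h1.2⟩
  push_neg at h0 h1
  exact ⟨2, by omega, by omega, by omega⟩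

variable {m n : ℕ} (hm : 3 ≤ m) (hmn : m ≤ n)

lemma Kmnt_dist_inl_inr_ne (i : Fin m) (j : Fin n) (h : (i : ℕ) ≠ (j : ℕ)) :
    (Kmnt m n m).dist (inl i) (inr j) = 1 :=
  SimpleGraph.dist_eq_one_iff_adj.2 ((Kmnt_adj_inl_inr i j).2 h)

include hm hmn in
lemma Kmnt_dist_inl_inl (i j : Fin m) (h : i ≠ j) :
    (Kmnt m n m).dist (inl i) (inl j) = 2 := by
  obtain ⟨k, hk3, hki, hkj⟩ := Kmnt_exists_third (i : ℕ) (j : ℕ)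
  have hkn : k < n := by omega
  have h1 : (Kmnt m n m).Adj (inl i) (inr ⟨k, hkn⟩) :=
    (Kmnt_adj_inl_inr i ⟨k, hkn⟩).2 (by simpa using fun hh => hki hh.symm)
  have h2 : (Kmnt m n m).Adj (inr ⟨k, hkn⟩) (inl j) :=
    ((Kmnt_adj_inl_inr j ⟨k, hkn⟩).2 (by simpa using fun hh => hkj hh.symm)).symm
  have hle : (Kmnt m n m).dist (inl i) (inl j) ≤ 2 := by
    simpa using SimpleGraph.dist_le (Walk.cons h1 (Walk.cons h2 Walk.nil))
  have hne0 : (Kmnt m n m).dist (inl i) (inl j) ≠ 0 := by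
    have := (Reachable.pos_dist_of_ne ⟨Walk.cons h1 (Walk.cons h2 Walk.nil)⟩ (by simpa using h))
    omega
  have hne1 : (Kmnt m n m).dist (inl i) (inl j) ≠ 1 := by
    rw [ne_eq, SimpleGraph.dist_eq_one_iff_adj]
    exact Kmnt_not_adj_inl_inl i j
  omega

include hm in
lemma Kmnt_dist_inr_inr (i j : Fin n) (h : i ≠ j) :
    (Kmnt m n m).dist (inr i) (inr j) = 2 := by
  obtain ⟨k, hk3, hki, hkj⟩ := Kmnt_exists_third (i : ℕ) (j : ℕ)
  have hkm : k < m := by omega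
  have h1 : (Kmnt m n m).Adj (inr i) (inl ⟨k, hkm⟩) :=
    ((Kmnt_adj_inl_inr ⟨k, hkm⟩ i).2 (by simpa using hki)).symm
  have h2 : (Kmnt m n m).Adj (inl ⟨k, hkm⟩) (inr j) :=
    (Kmnt_adj_inl_inr ⟨k, hkm⟩ j).2 (by simpa using hkj)
  have hle : (Kmnt m n m).dist (inr i) (inr j) ≤ 2 := by
    simpa using SimpleGraph.dist_le (Walk.cons h1 (Walk.cons h2 Walk.nil))
  have hne0 : (Kmnt m n m).dist (inr i) (inr j) ≠ 0 := by
    have := (Reachable.pos_dist_of_ne ⟨Walk.cons h1 (Walk.cons h2 Walk.nil)⟩ (by simpa using h))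
    omega
  have hne1 : (Kmnt m n m).dist (inr i) (inr j) ≠ 1 := by
    rw [ne_eq, SimpleGraph.dist_eq_one_iff_adj]
    exact Kmnt_not_adj_inr_inr i j
  omega

include hm hmn in
lemma Kmnt_dist_inl_inr_eq (i : Fin m) (j : Fin n) (h : (i : ℕ) = (j : ℕ)) :
    (Kmnt m n m).dist (inl i) (inr j) = 3 := by
  obtain ⟨c, hc3, hci, -⟩ := Kmnt_exists_third (i : ℕ) (i : ℕ)
  obtain ⟨d, hd3, hdi, hdc⟩ := Kmnt_exists_third (i : ℕ) c
  have hcn : c < n := by omega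
  have hdm : d < m := by omega
  have h1 : (Kmnt m n m).Adj (inl i) (inr ⟨c, hcn⟩) :=
    (Kmnt_adj_inl_inr i ⟨c, hcn⟩).2 (by simpa using fun hh => hci hh.symm)
  have h2 : (Kmnt m n m).Adj (inr ⟨c, hcn⟩) (inl ⟨d, hdm⟩) :=
    ((Kmnt_adj_inl_inr ⟨d, hdm⟩ ⟨c, hcn⟩).2 (by simpa using hdc)).symm
  have h3 : (Kmnt m n m).Adj (inl ⟨d, hdm⟩) (inr j) :=
    (Kmnt_adj_inl_inr ⟨d, hdm⟩ j).2 (by simp [← h]; exact hdi)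
  have hle : (Kmnt m n m).dist (inl i) (inr j) ≤ 3 := by
    simpa using SimpleGraph.dist_le (Walk.cons h1 (Walk.cons h2 (Walk.cons h3 Walk.nil)))
  have hne0 : (Kmnt m n m).dist (inl i) (inr j) ≠ 0 := by
    have := (Reachable.pos_dist_of_ne
      ⟨Walk.cons h1 (Walk.cons h2 (Walk.cons h3 Walk.nil))⟩ (by simp))
    omega
  have hne1 : (Kmnt m n m).dist (inl i) (inr j) ≠ 1 := by
    rw [ne_eq, SimpleGraph.dist_eq_one_iff_adj, Kmnt_adj_inl_inr]
    simpa using h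
  have hne2 : (Kmnt m n m).dist (inl i) (inr j) ≠ 2 := by
    intro h2d
    obtain ⟨q, hq⟩ := SimpleGraph.exists_walk_of_dist_ne_zero hne0
    rw [h2d] at hq
    cases q with
    | cons ha q' =>
      rename_i w
      cases w with
      | inl w => exact Kmnt_not_adj_inl_inl _ _ ha
      | inr w =>
        cases q' with
        | nil => simp at hq
        | cons hb q'' =>
          rename_i z
          cases z with
          | inr z => exact Kmnt_not_adj_inr_inr _ _ hb
          | inl z =>
            cases q'' with
            | cons hc q''' => simp at hq
  omega

lemma Kmnt_quad_form (hmn : m ≤ n) (f : Fin m ⊕ Fin n → ℝ)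
    (D : (Fin m ⊕ Fin n) → (Fin m ⊕ Fin n) → ℝ)
    (d11 : ∀ i j : Fin m, D (Sum.inl i) (Sum.inl j) = if i = j then 0 else 2)
    (d22 : ∀ i j : Fin n, D (Sum.inr i) (Sum.inr j) = if i = j then 0 else 2)
    (d12 : ∀ (i : Fin m) (j : Fin n), D (Sum.inl i) (Sum.inr j) = if (i:ℕ) = (j:ℕ) then 3 else 1)
    (d21 : ∀ (i : Fin m) (j : Fin n), D (Sum.inr j) (Sum.inl i) = if (i:ℕ) = (j:ℕ) then 3 else 1) :
    ∑ x, ∑ y, D x y * f x * f y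
      = 2 * (∑ i, f (Sum.inl i))^2 - 2 * (∑ i, f (Sum.inl i)^2)
        + 2 * (∑ j, f (Sum.inr j))^2 - 2 * (∑ j, f (Sum.inr j)^2)
        + 2 * (∑ i, f (Sum.inl i)) * (∑ j, f (Sum.inr j))
        + 4 * ∑ i : Fin m, f (Sum.inl i) * f (Sum.inr (Fin.castLE hmn i)) := by
  set a : Fin m → ℝ := fun i => f (Sum.inl i) with ha
  set b : Fin n → ℝ := fun j => f (Sum.inr j) with hb
  have key : ∀ (i : Fin m) (g : Fin n → ℝ),
      ∑ j : Fin n, (if (i:ℕ) = (j:ℕ) then g j else 0) = g (Fin.castLE hmn i) := by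
    intro i g
    have : ∀ j : Fin n, ((i:ℕ) = (j:ℕ)) = (Fin.castLE hmn i = j) := fun j => by simp [Fin.ext_iff]
    simp_rw [this]; simp
  have B11 : ∑ i, ∑ j, D (Sum.inl i) (Sum.inl j) * a i * a j
      = 2 * (∑ i, a i)^2 - 2 * ∑ i, a i ^ 2 := by
    have pw : ∀ i j, D (Sum.inl i) (Sum.inl j) * a i * a j
        = 2 * a i * a j - (if i = j then 2 * a i * a j else 0) := by
      intro i j; rw [d11]; split <;> ring
    simp_rw [pw, Finset.sum_sub_distrib, Finset.sum_ite_eq, Finset.mem_univ, if_pos]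
    congr 1
    · rw [sq, Finset.sum_mul_sum, Finset.mul_sum]
      exact Finset.sum_congr rfl fun i _ => by
        rw [Finset.mul_sum]; exact Finset.sum_congr rfl fun j _ => by ring
    · rw [Finset.mul_sum]; exact Finset.sum_congr rfl fun i _ => by ring
  have B22 : ∑ i, ∑ j, D (Sum.inr i) (Sum.inr j) * b i * b j
      = 2 * (∑ i, b i)^2 - 2 * ∑ i, b i ^ 2 := by
    have pw : ∀ i j, D (Sum.inr i) (Sum.inr j) * b i * b j
        = 2 * b i * b j - (if i = j then 2 * b i * b j else 0) := by
      intro i j; rw [d22]; split <;> ring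
    simp_rw [pw, Finset.sum_sub_distrib, Finset.sum_ite_eq, Finset.mem_univ, if_pos]
    congr 1
    · rw [sq, Finset.sum_mul_sum, Finset.mul_sum]
      exact Finset.sum_congr rfl fun i _ => by
        rw [Finset.mul_sum]; exact Finset.sum_congr rfl fun j _ => by ring
    · rw [Finset.mul_sum]; exact Finset.sum_congr rfl fun i _ => by ring
  have B12 : ∑ i, ∑ j, D (Sum.inl i) (Sum.inr j) * a i * b j
      = (∑ i, a i) * (∑ j, b j) + 2 * ∑ i, a i * b (Fin.castLE hmn i) := by
    have pw : ∀ i j, D (Sum.inl i) (Sum.inr j) * a i * b j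
        = a i * b j + (if (i:ℕ) = (j:ℕ) then 2 * (a i * b j) else 0) := by
      intro i j; rw [d12]; split <;> ring
    simp_rw [pw, Finset.sum_add_distrib]
    congr 1
    · rw [Finset.sum_mul_sum]
    · simp_rw [key]
      rw [Finset.mul_sum]
  have B21 : ∑ j, ∑ i, D (Sum.inr j) (Sum.inl i) * b j * a i
      = (∑ i, a i) * (∑ j, b j) + 2 * ∑ i, a i * b (Fin.castLE hmn i) := by
    rw [Finset.sum_comm]
    have pw : ∀ i j, D (Sum.inr j) (Sum.inl i) * b j * a i
        = a i * b j + (if (i:ℕ) = (j:ℕ) then 2 * (a i * b j) else 0) := by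
      intro i j; rw [d21]; split <;> ring
    simp_rw [pw, Finset.sum_add_distrib]
    congr 1
    · rw [Finset.sum_mul_sum]
    · simp_rw [key]
      rw [Finset.mul_sum]
  rw [Fintype.sum_sum_type]
  simp_rw [Fintype.sum_sum_type, Finset.sum_add_distrib]
  rw [B11, B22, B12, B21]
  ring

lemma Kmnt_core_ineq (M N x U W p q R : ℝ) (hM : 3 ≤ M) (hMN : M ≤ N)
    (hx2 : 2 ≤ x) (hxm : M - 2 ≤ x)
    (hchar : (M+N)*x^2 = 2*M*(N-2)*x + 4*(N-M))
    (hp : 0 ≤ p) (hq : 0 ≤ q) (hR : 0 ≤ R)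
    (hU : U^2 ≤ M*p) (hW : W^2 ≤ M*q) (hT : U^2 ≤ (N-M)*R)
    (hsum : p + q + 2*R = 2) :
    (U+W)^2/2 + p - q ≤ x := by
  have hxe : x*p + x*q + 2*(x*R) = 2*x := by linear_combination x*hsum
  rcases eq_or_lt_of_le hMN with hEq | hlt
  · have hU0 : U = 0 := by nlinarith [sq_nonneg U]
    have e1 : 0 ≤ (x-2)*p := mul_nonneg (by linarith) hp
    have e2 : 0 ≤ (x+2-M)*q := mul_nonneg (by linarith) hq
    have e3 : 0 ≤ x*R := mul_nonneg (by linarith) hR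
    have hU0' : U^2 = 0 := by rw [hU0]; ring
    nlinarith [e1, e2, e3, hW, hxe, hU0']
  · set A := (M+N)*x - (N-M)*(M+2) with hA
    set C := (N-M)*(x+2-M) with hC
    have hCnn : 0 ≤ C := by
      apply mul_nonneg <;> linarith
    have hAC : A*C = M^2*(N-M)^2 := by
      rw [hA, hC]; linear_combination (N-M)*hchar
    have hpos : 0 < M^2*(N-M)^2 :=
      mul_pos (pow_pos (by linarith) 2) (pow_pos (by linarith) 2)
    have hApos : 0 < A := by
      by_contra h
      push_neg at h
      nlinarith [mul_nonneg (neg_nonneg.2 h) hCnn]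
    have key2 : 0 ≤ A*U^2 + C*W^2 - 2*M*(N-M)*(U*W) := by
      have expand : A*(A*U^2 + C*W^2 - 2*M*(N-M)*(U*W))
          = (A*U - M*(N-M)*W)^2 + (A*C - M^2*(N-M)^2)*W^2 := by ring
      have h0 : 0 ≤ A*(A*U^2 + C*W^2 - 2*M*(N-M)*(U*W)) := by
        rw [expand, hAC, sub_self, zero_mul, add_zero]
        exact sq_nonneg _
      exact nonneg_of_mul_nonneg_right h0 hApos
    have h1 : 0 ≤ (N-M)*(x-2)*(M*p - U^2) :=
      mul_nonneg (mul_nonneg (by linarith) (by linarith)) (by linarith)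
    have h2 : 0 ≤ (N-M)*(x+2)*(M*q - W^2) :=
      mul_nonneg (mul_nonneg (by linarith) (by linarith)) (by linarith)
    have h3 : 0 ≤ 2*M*x*((N-M)*R - U^2) := by
      apply mul_nonneg (by nlinarith) (by linarith)
    have goal' : M*(N-M)*((U+W)^2 + 2*p - 2*q) ≤ M*(N-M)*(x*(p+q+2*R)) := by
      rw [hA, hC] at key2
      linarith [h1, h2, h3, key2]
    have hMNpos : 0 < M*(N-M) := mul_pos (by linarith) (by linarith)
    have h4 := le_of_mul_le_mul_left goal' hMNpos
    rw [hsum] at h4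
    linarith

end KmntAux
section Main
variable {m n : ℕ}

lemma Kmnt_quad_form' (hm : 3 ≤ m) (hmn : m ≤ n) (f : Fin m ⊕ Fin n → ℝ) :
    ∑ x, ∑ y, ((Kmnt m n m).dist x y : ℝ) * f x * f y
      = 2 * (∑ i, f (Sum.inl i))^2 - 2 * (∑ i, f (Sum.inl i)^2)
        + 2 * (∑ j, f (Sum.inr j))^2 - 2 * (∑ j, f (Sum.inr j)^2)
        + 2 * (∑ i, f (Sum.inl i)) * (∑ j, f (Sum.inr j))
        + 4 * ∑ i : Fin m, f (Sum.inl i) * f (Sum.inr (Fin.castLE hmn i)) := by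
  exact Kmnt_quad_form hmn f (fun a b => ((Kmnt m n m).dist a b : ℝ))
    (fun i j => by
      show (((Kmnt m n m).dist (inl i) (inl j) : ℕ) : ℝ) = _
      by_cases h : i = j
      · subst h; simp [SimpleGraph.dist_self]
      · rw [Kmnt_dist_inl_inl hm hmn i j h, if_neg h]; norm_num)
    (fun i j => by
      show (((Kmnt m n m).dist (inr i) (inr j) : ℕ) : ℝ) = _
      by_cases h : i = j
      · subst h; simp [SimpleGraph.dist_self]
      · rw [Kmnt_dist_inr_inr hm i j h, if_neg h]; norm_num)
    (fun i j => by
      show (((Kmnt m n m).dist (inl i) (inr j) : ℕ) : ℝ) = _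
      by_cases h : (i:ℕ) = (j:ℕ)
      · rw [Kmnt_dist_inl_inr_eq hm hmn i j h, if_pos h]; norm_num
      · rw [Kmnt_dist_inl_inr_ne i j h, if_neg h]; norm_num)
    (fun i j => by
      show (((Kmnt m n m).dist (inr j) (inl i) : ℕ) : ℝ) = _
      rw [SimpleGraph.dist_comm]
      by_cases h : (i:ℕ) = (j:ℕ)
      · rw [Kmnt_dist_inl_inr_eq hm hmn i j h, if_pos h]; norm_num
      · rw [Kmnt_dist_inl_inr_ne i j h, if_neg h]; norm_num)

end Main

set_option maxHeartbeats 2000000 in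
/-- QEC(K_{m,n}^m) = (mn − 4m − 2n + √(m²n² + 4n² − 4m²n))/(m + n) for 3 ≤ m ≤ n, n ≥ 4. -/
theorem stmt4 (m n : ℕ) (hm : 3 ≤ m) (hmn : m ≤ n) (hn : 4 ≤ n) :
    IsGreatest {r : ℝ | ∃ f : Fin m ⊕ Fin n → ℝ,
        (∑ x, f x ^ 2) = 1 ∧ (∑ x, f x) = 0 ∧
        r = ∑ x, ∑ y, ((Kmnt m n m).dist x y : ℝ) * f x * f y}
      (((m : ℝ) * n - 4 * m - 2 * n +
          Real.sqrt ((m : ℝ) ^ 2 * (n : ℝ) ^ 2 + 4 * (n : ℝ) ^ 2 - 4 * (m : ℝ) ^ 2 * n)) /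
        (m + n)) := by
  have hM : (3:ℝ) ≤ (m:ℝ) := by exact_mod_cast hm
  have hN : (4:ℝ) ≤ (n:ℝ) := by exact_mod_cast hn
  have hMN : (m:ℝ) ≤ (n:ℝ) := by exact_mod_cast hmn
  have hMNpos : (0:ℝ) < (m:ℝ) + (n:ℝ) := by linarith
  have hD0 : (0:ℝ) ≤ (m:ℝ)^2*(n:ℝ)^2 + 4*(n:ℝ)^2 - 4*(m:ℝ)^2*(n:ℝ) := by
    have k0 : 0 ≤ (m:ℝ)^2*((n:ℝ)*((n:ℝ)-4)) :=
      mul_nonneg (sq_nonneg _) (mul_nonneg (by linarith) (by linarith))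
    nlinarith [sq_nonneg (n:ℝ)]
  set L := Real.sqrt ((m:ℝ)^2*(n:ℝ)^2 + 4*(n:ℝ)^2 - 4*(m:ℝ)^2*(n:ℝ)) with hLdef
  have hL0 : 0 ≤ L := Real.sqrt_nonneg _
  have hL2 : L^2 = (m:ℝ)^2*(n:ℝ)^2 + 4*(n:ℝ)^2 - 4*(m:ℝ)^2*(n:ℝ) := Real.sq_sqrt hD0
  set x := ((m:ℝ)*(n:ℝ) - 2*(m:ℝ) + L)/((m:ℝ)+(n:ℝ)) with hxdef
  have hxmul : ((m:ℝ)+(n:ℝ))*x = (m:ℝ)*(n:ℝ) - 2*(m:ℝ) + L := by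
    rw [hxdef]; field_simp
  have hsqle : ∀ c : ℝ, c^2 ≤ (m:ℝ)^2*(n:ℝ)^2 + 4*(n:ℝ)^2 - 4*(m:ℝ)^2*(n:ℝ) → c ≤ L := by
    intro c hc
    calc c ≤ |c| := le_abs_self c
      _ = Real.sqrt (c^2) := (Real.sqrt_sq_eq_abs c).symm
      _ ≤ L := by rw [hLdef]; exact Real.sqrt_le_sqrt hc
  have hx2 : 2 ≤ x := by
    have k1 : 0 ≤ 4*(m:ℝ)*(((m:ℝ)+(n:ℝ))*((n:ℝ)-4)) :=
      mul_nonneg (by linarith) (mul_nonneg (by linarith) (by linarith))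
    have h := hsqle (4*(m:ℝ)+2*(n:ℝ)-(m:ℝ)*(n:ℝ)) (by nlinarith [k1])
    rw [hxdef, le_div_iff₀ hMNpos]
    linarith
  have hxm : (m:ℝ) - 2 ≤ x := by
    have k2 : 0 ≤ (m:ℝ)^2*(((n:ℝ)-(m:ℝ))*((n:ℝ)+(m:ℝ))) :=
      mul_nonneg (sq_nonneg _) (mul_nonneg (by linarith) (by linarith))
    have h := hsqle ((m:ℝ)^2-2*(n:ℝ)) (by nlinarith [k2])
    rw [hxdef, le_div_iff₀ hMNpos]
    nlinarith [h]
  have hchar : ((m:ℝ)+(n:ℝ))*x^2 = 2*(m:ℝ)*((n:ℝ)-2)*x + 4*((n:ℝ)-(m:ℝ)) := by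
    have h2 : (((m:ℝ)+(n:ℝ))*x)^2
        = 2*(m:ℝ)*((n:ℝ)-2)*(((m:ℝ)+(n:ℝ))*x) + 4*((n:ℝ)-(m:ℝ))*((m:ℝ)+(n:ℝ)) := by
      rw [hxmul]; linear_combination hL2
    have h3 : ((m:ℝ)+(n:ℝ))*(((m:ℝ)+(n:ℝ))*x^2)
        = ((m:ℝ)+(n:ℝ))*(2*(m:ℝ)*((n:ℝ)-2)*x + 4*((n:ℝ)-(m:ℝ))) := by
      have e : ((m:ℝ)+(n:ℝ))*(((m:ℝ)+(n:ℝ))*x^2) = (((m:ℝ)+(n:ℝ))*x)^2 := by ring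
      rw [e, h2]; ring
    exact mul_left_cancel₀ (ne_of_gt hMNpos) h3
  have hval : ((m : ℝ) * n - 4 * m - 2 * n + L) / ((m:ℝ) + (n:ℝ)) = x - 2 := by
    rw [hxdef]; field_simp; ring
  rw [hval]
  clear_value L x
  have hsplit : ∀ g : ℕ → ℝ, ∑ k ∈ Finset.range n, g k
      = ∑ k ∈ Finset.range m, g k + ∑ k ∈ Finset.Ico m n, g k := by
    intro g
    rw [Finset.range_eq_Ico, ← Finset.sum_Ico_consecutive g (Nat.zero_le m) hmn, Finset.range_eq_Ico]
  constructor
  · -- membership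
    set bb := (x+2-2*(m:ℝ))*x with hbb
    set gg := x^2 - 2*(m:ℝ)*x - 4 with hgg
    set Nr := (m:ℝ)*(x*(x+2))^2 + (m:ℝ)*bb^2 + ((n:ℝ)-(m:ℝ))*gg^2 with hNr
    have h8 : 8 ≤ x*(x+2) := by nlinarith
    have hNrpos : 0 < Nr := by
      have t1 : (0:ℝ) < (m:ℝ)*(x*(x+2))^2 := mul_pos (by linarith) (by nlinarith)
      have t2 : (0:ℝ) ≤ (m:ℝ)*bb^2 := mul_nonneg (by linarith) (sq_nonneg _)
      have t3 : (0:ℝ) ≤ ((n:ℝ)-(m:ℝ))*gg^2 := mul_nonneg (by linarith) (sq_nonneg _)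
      rw [hNr]; linarith
    have hspos : 0 < Real.sqrt Nr := Real.sqrt_pos.2 hNrpos
    set cc := (Real.sqrt Nr)⁻¹ with hcc
    have hcc2 : cc^2 * Nr = 1 := by
      rw [hcc, inv_pow, Real.sq_sqrt hNrpos.le]
      exact inv_mul_cancel₀ (ne_of_gt hNrpos)
    clear_value bb gg Nr cc
    set gf : Fin m ⊕ Fin n → ℝ :=
      fun z => cc * (Sum.elim (fun _ => x*(x+2)) (fun j => if (j:ℕ) < m then bb else gg) z)
      with hgf
    have hIfGen : ∀ u v : ℝ, ∑ j : Fin n, (if (j:ℕ) < m then u else v)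
        = (m:ℝ)*u + ((n:ℝ)-(m:ℝ))*v := by
      intro u v
      rw [Fin.sum_univ_eq_sum_range (fun k => if k < m then u else v) n, hsplit]
      have e1 : ∑ k ∈ Finset.range m, (if k < m then u else v) = (m:ℝ)*u := by
        rw [Finset.sum_congr rfl fun k hk => if_pos (Finset.mem_range.1 hk),
          Finset.sum_const, Finset.card_range, nsmul_eq_mul]
      have e2 : ∑ k ∈ Finset.Ico m n, (if k < m then u else v) = ((n:ℝ)-(m:ℝ))*v := by
        rw [Finset.sum_congr rfl fun k hk => if_neg (by
          have := (Finset.mem_Ico.1 hk).1; omega),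
          Finset.sum_const, Nat.card_Ico, nsmul_eq_mul, Nat.cast_sub hmn]
      rw [e1, e2]
    have hga : ∀ i : Fin m, gf (inl i) = cc*(x*(x+2)) := fun i => rfl
    have hgb : ∀ j : Fin n, gf (inr j) = cc*(if (j:ℕ) < m then bb else gg) := fun j => rfl
    clear_value gf
    have Sa : ∑ i : Fin m, gf (inl i) = (m:ℝ)*(cc*(x*(x+2))) := by
      simp_rw [hga]
      rw [Finset.sum_const, Finset.card_univ, Fintype.card_fin, nsmul_eq_mul]
    have Sa2 : ∑ i : Fin m, gf (inl i)^2 = (m:ℝ)*(cc*(x*(x+2)))^2 := by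
      simp_rw [hga]
      rw [Finset.sum_const, Finset.card_univ, Fintype.card_fin, nsmul_eq_mul]
    have Sb : ∑ j : Fin n, gf (inr j) = cc*((m:ℝ)*bb + ((n:ℝ)-(m:ℝ))*gg) := by
      simp_rw [hgb]
      rw [← Finset.mul_sum, hIfGen]
    have Sb2 : ∑ j : Fin n, gf (inr j)^2 = cc^2*((m:ℝ)*bb^2 + ((n:ℝ)-(m:ℝ))*gg^2) := by
      have pw : ∀ j : Fin n, gf (inr j)^2 = cc^2 * (if (j:ℕ) < m then bb^2 else gg^2) := by
        intro j
        rw [hgb]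
        split <;> ring
      simp_rw [pw]
      rw [← Finset.mul_sum, hIfGen]
    have SP : ∑ i : Fin m, gf (inl i) * gf (inr (Fin.castLE hmn i))
        = (m:ℝ)*((cc*(x*(x+2)))*(cc*bb)) := by
      have pw : ∀ i : Fin m, gf (inl i) * gf (inr (Fin.castLE hmn i))
          = (cc*(x*(x+2)))*(cc*bb) := by
        intro i
        rw [hga, hgb]
        have : ((Fin.castLE hmn i : Fin n) : ℕ) < m := by
          simpa using i.isLt
        rw [if_pos this]
      simp_rw [pw]
      rw [Finset.sum_const, Finset.card_univ, Fintype.card_fin, nsmul_eq_mul]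
    have hI1 : (m:ℝ)*(x*(x+2)) + (m:ℝ)*bb + ((n:ℝ)-(m:ℝ))*gg = 0 := by
      rw [hbb, hgg]; linear_combination hchar
    have hI2 : 2*(m:ℝ)^2*(x*(x+2))^2 + 4*(m:ℝ)*(x*(x+2))*bb = x*Nr := by
      rw [hNr, hbb, hgg]; linear_combination (-x^3+2*(m:ℝ)*x^2+4*x)*hchar
    have hnorm_g : ∑ z, gf z ^ 2 = 1 := by
      rw [Fintype.sum_sum_type, Sa2, Sb2]
      linear_combination hcc2 - cc^2*hNr
    have hzero_g : ∑ z, gf z = 0 := by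
      rw [Fintype.sum_sum_type, Sa, Sb]
      linear_combination cc * hI1
    refine ⟨gf, hnorm_g, hzero_g, ?_⟩
    rw [Kmnt_quad_form' hm hmn gf, Sa, Sa2, Sb, Sb2, SP]
    linear_combination (-(2*cc^2*((m:ℝ)*bb+((n:ℝ)-(m:ℝ))*gg)))*hI1 - cc^2*hI2 - (x-2)*hcc2
      - 2*cc^2*hNr
  · -- upper bound
    rintro r ⟨f, hnorm, hzero, rfl⟩
    rw [Kmnt_quad_form' hm hmn f]
    rw [Fintype.sum_sum_type] at hnorm hzero
    set Af : ℕ → ℝ := fun k => if h : k < m then f (inl ⟨k,h⟩) else 0 with hAf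
    set Bf : ℕ → ℝ := fun k => if h : k < n then f (inr ⟨k,h⟩) else 0 with hBf
    have hfa : ∀ i : Fin m, f (inl i) = Af i := by intro i; simp [hAf, i.isLt]
    have hfb : ∀ j : Fin n, f (inr j) = Bf j := by intro j; simp [hBf, j.isLt]
    have hfb' : ∀ i : Fin m, f (inr (Fin.castLE hmn i)) = Bf i := by
      intro i
      have hin : (i:ℕ) < n := lt_of_lt_of_le i.isLt hmn
      rw [hfb (Fin.castLE hmn i)]
      congr 1
    have ea : ∑ i : Fin m, f (inl i) = ∑ k ∈ Finset.range m, Af k := by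
      simp_rw [hfa]; exact Fin.sum_univ_eq_sum_range Af m
    have ea2 : ∑ i : Fin m, f (inl i)^2 = ∑ k ∈ Finset.range m, Af k^2 := by
      simp_rw [hfa]; exact Fin.sum_univ_eq_sum_range (fun k => Af k^2) m
    have eb : ∑ j : Fin n, f (inr j) = ∑ k ∈ Finset.range n, Bf k := by
      simp_rw [hfb]; exact Fin.sum_univ_eq_sum_range Bf n
    have eb2 : ∑ j : Fin n, f (inr j)^2 = ∑ k ∈ Finset.range n, Bf k^2 := by
      simp_rw [hfb]; exact Fin.sum_univ_eq_sum_range (fun k => Bf k^2) n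
    have eP : ∑ i : Fin m, f (inl i) * f (inr (Fin.castLE hmn i))
        = ∑ k ∈ Finset.range m, Af k * Bf k := by
      simp_rw [hfa, hfb']; exact Fin.sum_univ_eq_sum_range (fun k => Af k * Bf k) m
    rw [ea2, eb2] at hnorm
    rw [ea, eb] at hzero
    rw [ea, ea2, eb, eb2, eP]
    set U := ∑ k ∈ Finset.range m, (Af k + Bf k) with hUdef
    set W := ∑ k ∈ Finset.range m, (Af k - Bf k) with hWdef
    set p := ∑ k ∈ Finset.range m, (Af k + Bf k)^2 with hpdef
    set q := ∑ k ∈ Finset.range m, (Af k - Bf k)^2 with hqdef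
    set T := ∑ k ∈ Finset.Ico m n, Bf k with hTdef
    set R := ∑ k ∈ Finset.Ico m n, Bf k^2 with hRdef
    have hUW : U + W = 2 * ∑ k ∈ Finset.range m, Af k := by
      rw [hUdef, hWdef, ← Finset.sum_add_distrib, Finset.mul_sum]
      exact Finset.sum_congr rfl fun k _ => by ring
    have hUW2 : U - W = 2 * ∑ k ∈ Finset.range m, Bf k := by
      rw [hUdef, hWdef, ← Finset.sum_sub_distrib, Finset.mul_sum]
      exact Finset.sum_congr rfl fun k _ => by ring
    have hbs : ∑ k ∈ Finset.range n, Bf k = ∑ k ∈ Finset.range m, Bf k + T := hsplit Bf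
    have hbs2 : ∑ k ∈ Finset.range n, Bf k^2 = ∑ k ∈ Finset.range m, Bf k^2 + R :=
      hsplit (fun k => Bf k^2)
    have hpq : p + q = 2*(∑ k ∈ Finset.range m, Af k^2) + 2*(∑ k ∈ Finset.range m, Bf k^2) := by
      rw [hpdef, hqdef, ← Finset.sum_add_distrib, Finset.mul_sum, Finset.mul_sum,
        ← Finset.sum_add_distrib]
      exact Finset.sum_congr rfl fun k _ => by ring
    have hPq : p - q = 4*(∑ k ∈ Finset.range m, Af k * Bf k) := by
      rw [hpdef, hqdef, ← Finset.sum_sub_distrib, Finset.mul_sum]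
      exact Finset.sum_congr rfl fun k _ => by ring
    have hp0 : 0 ≤ p := Finset.sum_nonneg fun k _ => sq_nonneg _
    have hq0 : 0 ≤ q := Finset.sum_nonneg fun k _ => sq_nonneg _
    have hR0 : 0 ≤ R := Finset.sum_nonneg fun k _ => sq_nonneg _
    have hUcs : U^2 ≤ (m:ℝ)*p := by
      have h := sq_sum_le_card_mul_sum_sq (s := Finset.range m)
        (f := fun k => Af k + Bf k)
      rwa [Finset.card_range] at h
    have hWcs : W^2 ≤ (m:ℝ)*q := by
      have h := sq_sum_le_card_mul_sum_sq (s := Finset.range m)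
        (f := fun k => Af k - Bf k)
      rwa [Finset.card_range] at h
    have hTcs : T^2 ≤ ((n:ℝ)-(m:ℝ))*R := by
      have h := sq_sum_le_card_mul_sum_sq (s := Finset.Ico m n) (f := Bf)
      rwa [Nat.card_Ico, Nat.cast_sub hmn] at h
    have hUT : U + T = 0 := by
      have : U = ∑ k ∈ Finset.range m, Af k + ∑ k ∈ Finset.range m, Bf k := by
        rw [hUdef, Finset.sum_add_distrib]
      rw [hbs] at hzero
      linarith
    have hUcs2 : U^2 ≤ ((n:ℝ)-(m:ℝ))*R := by
      have hU : U = -T := by linarith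
      rw [hU, neg_sq]; exact hTcs
    have hsum2 : p + q + 2*R = 2 := by
      rw [hbs2] at hnorm
      linarith
    have hcore := Kmnt_core_ineq (m:ℝ) (n:ℝ) x U W p q R hM hMN hx2 hxm hchar
      hp0 hq0 hR0 hUcs hWcs hUcs2 hsum2
    have hsb : ∑ k ∈ Finset.range n, Bf k = - ∑ k ∈ Finset.range m, Af k := by linarith
    have hsa : ∑ k ∈ Finset.range m, Af k = (U+W)/2 := by linarith
    have hSaSb : (∑ k ∈ Finset.range m, Af k^2) + (∑ k ∈ Finset.range n, Bf k^2) = 1 := hnorm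
    calc 2 * (∑ k ∈ Finset.range m, Af k) ^ 2 - 2 * ∑ k ∈ Finset.range m, Af k ^ 2
          + 2 * (∑ k ∈ Finset.range n, Bf k) ^ 2 - 2 * ∑ k ∈ Finset.range n, Bf k ^ 2
          + 2 * (∑ k ∈ Finset.range m, Af k) * ∑ k ∈ Finset.range n, Bf k
          + 4 * ∑ k ∈ Finset.range m, Af k * Bf k
        = (U+W)^2/2 + p - q - 2 := by
          rw [hsb, hsa, ← hPq]
          linear_combination (-2) * hSaSb
      _ ≤ x - 2 := by linarith
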